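/- Let P be a finite poset such that I(P) is regular hyper-planar, with canonical chain decomposition C_1 \cup ... \cup C_d. Then there is exactly one v \in T(P) with v(-\infty) = rank \hat{P} (i.e. I(P) is pseudo-Gorenstein) if and only if all the chains C_1, ..., C_d have the same length. -/

import Mathlib

open Classical

/-- `Hat P` is the poset `P` with a new least element `-∞ = ⊥` and a new
greatest element `∞ = ⊤` adjoined. -/
abbrev Hat (P : Type*) := WithBot (WithTop P)

/-- The canonical inclusion of `P` into `Hat P`. -/
def toHat {P : Type*} (x : P) : Hat P := ((x : WithTop P) : WithBot (WithTop P))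

/-- The rank of a poset: the maximal length (number of covering steps) of a
chain, encoded as the maximal `n` admitting a strictly increasing sequence of
`n + 1` elements. -/
noncomputable def rankN (Q : Type*) [Preorder Q] : ℕ :=
  sSup {n : ℕ | ∃ f : Fin (n + 1) → Q, StrictMono f}

/-- The height of `x` in a poset `Q`: the rank of the subposet `{y | y ≤ x}`. -/
noncomputable def heightN {Q : Type*} [Preorder Q] (x : Q) : ℕ :=
  sSup {n : ℕ | ∃ f : Fin (n + 1) → Q, StrictMono f ∧ ∀ i, f i ≤ x}

/-- The depth of `x` in a poset `Q`: the rank of the subposet `{y | x ≤ y}`. -/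
noncomputable def depthN {Q : Type*} [Preorder Q] (x : Q) : ℕ :=
  sSup {n : ℕ | ∃ f : Fin (n + 1) → Q, StrictMono f ∧ ∀ i, x ≤ f i}

/-- `v` belongs to `S(P)`: `v : Hat P → ℕ` is order-reversing with `v ∞ = 0`. -/
def memS (P : Type*) [PartialOrder P] (v : Hat P → ℕ) : Prop :=
  v ⊤ = 0 ∧ ∀ p q : Hat P, p ≤ q → v q ≤ v p

/-- `v` belongs to `T(P)`: `v : Hat P → ℕ` is strictly order-reversing with
`v ∞ = 0`. -/
def memT (P : Type*) [PartialOrder P] (v : Hat P → ℕ) : Prop :=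
  v ⊤ = 0 ∧ ∀ p q : Hat P, p < q → v q < v p

/-- The partial order of `T(P)`: `v ≥ w` iff `v` dominates `w` pointwise and the
pointwise difference `v - w` is order-reversing. -/
def Tge (P : Type*) [PartialOrder P] (v w : Hat P → ℕ) : Prop :=
  (∀ p : Hat P, w p ≤ v p) ∧ ∀ p q : Hat P, p ≤ q → v q - w q ≤ v p - w p

/-- `v` is a minimal element of the poset `T(P)`. -/
def IsMinT (P : Type*) [PartialOrder P] (v : Hat P → ℕ) : Prop :=
  memT P v ∧ ∀ w : Hat P → ℕ, memT P w → Tge P v w → w = v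

/-- A poset is pure if all its maximal chains have the same length, equivalently
the same cardinality. -/
def IsPure (P : Type*) [PartialOrder P] : Prop :=
  ∀ C D : Set P, IsMaxChain (· ≤ ·) C → IsMaxChain (· ≤ ·) D → C.ncard = D.ncard

/-- The height of `x` inside a chain `C`: the number of elements of `C`
strictly below `x`. -/
noncomputable def heightC {P : Type*} [PartialOrder P] (C : Set P) (x : P) : ℕ :=
  {z ∈ C | z < x}.ncard

/-- A canonical chain decomposition of `P`: a partition of `P` into chains,
each of which is a maximal chain of `P`. -/
def IsCCD {P : Type*} [PartialOrder P] {d : ℕ} (C : Fin d → Set P) : Prop :=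
  (∀ i, IsMaxChain (· ≤ ·) (C i)) ∧
  (∀ i j, i ≠ j → Disjoint (C i) (C j)) ∧
  (⋃ i, C i) = Set.univ

/-- The lattice of lower sets of `P` is regular hyper-planar: `P` admits a
canonical chain decomposition and, for every canonical chain decomposition and
all `x < y` with `x ∈ Cᵢ`, `y ∈ Cⱼ`, one has `height_{Cᵢ}(x) < height_{Cⱼ}(y)`. -/
def RegularHP (P : Type*) [PartialOrder P] : Prop :=
  (∃ (d : ℕ) (C : Fin d → Set P), IsCCD C) ∧
  ∀ (d : ℕ) (C : Fin d → Set P), IsCCD C →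
    ∀ (i j : Fin d) (x y : P), x ∈ C i → y ∈ C j → x < y →
      heightC (C i) x < heightC (C j) y

/-- The lattice of lower sets of `P` is regular planar: `P` admits a canonical
chain decomposition into two chains and the regularity condition holds for all
such decompositions. -/
def RegularPlanar (P : Type*) [PartialOrder P] : Prop :=
  (∃ C : Fin 2 → Set P, IsCCD C) ∧
  ∀ C : Fin 2 → Set P, IsCCD C →
    ∀ (i j : Fin 2) (x y : P), x ∈ C i → y ∈ C j → x < y →
      heightC (C i) x < heightC (C j) y

set_option linter.unusedSectionVars false
set_option maxHeartbeats 1000000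

instance {α : Type*} [Fintype α] : Fintype (WithBot α) := inferInstanceAs (Fintype (Option α))
instance {α : Type*} [Fintype α] : Fintype (WithTop α) := inferInstanceAs (Fintype (Option α))

section Basic

variable {Q : Type*} [PartialOrder Q] [Fintype Q]

lemma myChain_card_le {n : ℕ} (f : Fin (n + 1) → Q) (hf : StrictMono f) :
    n + 1 ≤ Fintype.card Q := by
  simpa using Fintype.card_le_of_injective f hf.injective

lemma my_const_strictMono (x : Q) : StrictMono (fun _ : Fin 1 => x) :=
  fun i j h => absurd (Subsingleton.elim i j) h.ne

lemma myHeight_bdd (x : Q) :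
    BddAbove {n : ℕ | ∃ f : Fin (n + 1) → Q, StrictMono f ∧ ∀ i, f i ≤ x} := by
  refine ⟨Fintype.card Q, fun n hn => ?_⟩
  obtain ⟨f, hf, -⟩ := hn
  have := myChain_card_le f hf; omega

lemma myDepth_bdd (x : Q) :
    BddAbove {n : ℕ | ∃ f : Fin (n + 1) → Q, StrictMono f ∧ ∀ i, x ≤ f i} := by
  refine ⟨Fintype.card Q, fun n hn => ?_⟩
  obtain ⟨f, hf, -⟩ := hn
  have := myChain_card_le f hf; omega

lemma myRank_bdd : BddAbove {n : ℕ | ∃ f : Fin (n + 1) → Q, StrictMono f} := by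
  refine ⟨Fintype.card Q, fun n hn => ?_⟩
  obtain ⟨f, hf⟩ := hn
  have := myChain_card_le f hf; omega

lemma myHeight_mem0 (x : Q) :
    0 ∈ {n : ℕ | ∃ f : Fin (n + 1) → Q, StrictMono f ∧ ∀ i, f i ≤ x} :=
  ⟨fun _ => x, my_const_strictMono x, fun _ => le_refl x⟩

lemma myDepth_mem0 (x : Q) :
    0 ∈ {n : ℕ | ∃ f : Fin (n + 1) → Q, StrictMono f ∧ ∀ i, x ≤ f i} :=
  ⟨fun _ => x, my_const_strictMono x, fun _ => le_refl x⟩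

lemma myHeight_spec (x : Q) :
    ∃ f : Fin (heightN x + 1) → Q, StrictMono f ∧ ∀ i, f i ≤ x :=
  Nat.sSup_mem ⟨0, myHeight_mem0 x⟩ (myHeight_bdd x)

lemma myDepth_spec (x : Q) :
    ∃ f : Fin (depthN x + 1) → Q, StrictMono f ∧ ∀ i, x ≤ f i :=
  Nat.sSup_mem ⟨0, myDepth_mem0 x⟩ (myDepth_bdd x)

lemma myRank_spec [Nonempty Q] :
    ∃ f : Fin (rankN Q + 1) → Q, StrictMono f := by
  refine Nat.sSup_mem ⟨0, ?_⟩ myRank_bdd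
  exact ⟨fun _ => Classical.arbitrary Q, my_const_strictMono _⟩

lemma le_myHeight {x : Q} {n : ℕ}
    (h : ∃ f : Fin (n + 1) → Q, StrictMono f ∧ ∀ i, f i ≤ x) : n ≤ heightN x :=
  le_csSup (myHeight_bdd x) h

lemma le_myDepth {x : Q} {n : ℕ}
    (h : ∃ f : Fin (n + 1) → Q, StrictMono f ∧ ∀ i, x ≤ f i) : n ≤ depthN x :=
  le_csSup (myDepth_bdd x) h

lemma le_myRank {n : ℕ} (h : ∃ f : Fin (n + 1) → Q, StrictMono f) : n ≤ rankN Q :=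
  le_csSup myRank_bdd h

lemma myHeight_le_rank (x : Q) : heightN x ≤ rankN Q := by
  refine csSup_le ⟨0, myHeight_mem0 x⟩ fun n hn => ?_
  obtain ⟨f, hf, -⟩ := hn
  exact le_myRank ⟨f, hf⟩

lemma myHeight_le {x : Q} {m : ℕ}
    (h : ∀ n, (∃ f : Fin (n + 1) → Q, StrictMono f ∧ ∀ i, f i ≤ x) → n ≤ m) :
    heightN x ≤ m :=
  csSup_le ⟨0, myHeight_mem0 x⟩ h

lemma myDepth_le {x : Q} {m : ℕ}
    (h : ∀ n, (∃ f : Fin (n + 1) → Q, StrictMono f ∧ ∀ i, x ≤ f i) → n ≤ m) :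
    depthN x ≤ m :=
  csSup_le ⟨0, myDepth_mem0 x⟩ h

lemma myRank_le {m : ℕ} [Nonempty Q]
    (h : ∀ n, (∃ f : Fin (n + 1) → Q, StrictMono f) → n ≤ m) :
    rankN Q ≤ m :=
  csSup_le ⟨0, fun _ => Classical.arbitrary Q, my_const_strictMono _⟩ h

lemma my_drop {n : ℕ} (g : Fin (n + 1) → ℕ)
    (hg : ∀ i j : Fin (n + 1), i < j → g j < g i) (i : Fin (n + 1)) :
    g i + i.val ≤ g 0 := by
  induction i using Fin.induction with
  | zero => simp
  | succ i ih =>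
    have h1 := hg i.castSucc i.succ Fin.castSucc_lt_succ
    have h2 : (Fin.castSucc i).val = i.val := rfl
    have h3 : (Fin.succ i).val = i.val + 1 := rfl
    omega

lemma myHeight_spec' (x : Q) :
    ∃ f : Fin (heightN x + 1) → Q, StrictMono f ∧ (∀ i, f i ≤ x) ∧ f (Fin.last _) = x := by
  obtain ⟨f, hf, hle⟩ := myHeight_spec x
  by_cases hlast : f (Fin.last _) = x
  · exact ⟨f, hf, hle, hlast⟩
  · exfalso
    have hlt : f (Fin.last _) < x := (hle _).lt_of_ne hlast
    have : heightN x + 1 ≤ heightN x := by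
      refine le_myHeight ⟨fun t => if ht : t.val = heightN x + 1 then x else
        f ⟨t.val, by have := t.isLt; omega⟩, ?_, ?_⟩
      · intro a b hab
        dsimp only
        have hab' : a.val < b.val := hab
        have hbl := b.isLt
        by_cases hb : b.val = heightN x + 1
        · rw [dif_pos hb, dif_neg (by omega : ¬ a.val = heightN x + 1)]
          refine lt_of_le_of_lt (hf.monotone ?_) hlt
          simp only [Fin.le_def, Fin.val_last]
          omega
        · rw [dif_neg hb, dif_neg (by omega : ¬ a.val = heightN x + 1)]
          exact hf (Fin.mk_lt_mk.mpr (by omega))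
      · intro t
        dsimp only
        by_cases ht : t.val = heightN x + 1
        · rw [dif_pos ht]
        · rw [dif_neg ht]; exact hle _
    omega

lemma myDepth_strictAnti {x y : Q} (h : x < y) : depthN y < depthN x := by
  obtain ⟨f, hf, hge⟩ := myDepth_spec y
  have : depthN y + 1 ≤ depthN x := by
    refine le_myDepth ⟨fun t => if ht : t.val = 0 then x else
      f ⟨t.val - 1, by have := t.isLt; omega⟩, ?_, ?_⟩
    · intro a b hab
      dsimp only
      have hab' : a.val < b.val := hab
      by_cases ha : a.val = 0
      · rw [dif_pos ha, dif_neg (by omega : ¬ b.val = 0)]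
        exact h.trans_le (hge _)
      · rw [dif_neg ha, dif_neg (by omega : ¬ b.val = 0)]
        exact hf (Fin.mk_lt_mk.mpr (by omega))
    · intro t
      dsimp only
      by_cases ht : t.val = 0
      · rw [dif_pos ht]
      · rw [dif_neg ht]; exact (h.le).trans (hge _)
  omega

lemma myHeight_strictMono {x y : Q} (h : x < y) : heightN x < heightN y := by
  obtain ⟨f, hf, hle⟩ := myHeight_spec x
  have : heightN x + 1 ≤ heightN y := by
    refine le_myHeight ⟨fun t => if ht : t.val = heightN x + 1 then y else
      f ⟨t.val, by have := t.isLt; omega⟩, ?_, ?_⟩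
    · intro a b hab
      dsimp only
      have hab' : a.val < b.val := hab
      have hbl := b.isLt
      by_cases hb : b.val = heightN x + 1
      · rw [dif_pos hb, dif_neg (by omega : ¬ a.val = heightN x + 1)]
        exact ((hle _).trans_lt h)
      · rw [dif_neg hb, dif_neg (by omega : ¬ a.val = heightN x + 1)]
        exact hf (Fin.mk_lt_mk.mpr (by omega))
    · intro t
      dsimp only
      by_cases ht : t.val = heightN x + 1
      · rw [dif_pos ht]
      · rw [dif_neg ht]; exact (hle _).trans h.le
  omega

lemma myHeight_top [OrderTop Q] : heightN (⊤ : Q) = rankN Q := by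
  unfold heightN rankN
  congr 1
  ext n
  exact ⟨fun ⟨f, hf, _⟩ => ⟨f, hf⟩, fun ⟨f, hf⟩ => ⟨f, hf, fun _ => le_top⟩⟩

lemma myDepth_bot [OrderBot Q] : depthN (⊥ : Q) = rankN Q := by
  unfold depthN rankN
  congr 1
  ext n
  exact ⟨fun ⟨f, hf, _⟩ => ⟨f, hf⟩, fun ⟨f, hf⟩ => ⟨f, hf, fun _ => bot_le⟩⟩

lemma myDepth_top [OrderTop Q] : depthN (⊤ : Q) = 0 := by
  refine Nat.le_zero.mp (myDepth_le fun n hn => ?_)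
  obtain ⟨f, hf, hge⟩ := hn
  by_contra hcon
  have h1 : (⟨0, by omega⟩ : Fin (n + 1)) < ⟨1, by omega⟩ := by simp [Fin.lt_def]
  have h2 := hf h1
  have e0 : f ⟨0, by omega⟩ = ⊤ := top_le_iff.mp (hge _)
  have e1 : f ⟨1, by omega⟩ = ⊤ := top_le_iff.mp (hge _)
  rw [e0, e1] at h2
  exact lt_irrefl _ h2

lemma myHeight_bot [OrderBot Q] : heightN (⊥ : Q) = 0 := by
  refine Nat.le_zero.mp (myHeight_le fun n hn => ?_)
  obtain ⟨f, hf, hle⟩ := hn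
  by_contra hcon
  have h1 : (⟨0, by omega⟩ : Fin (n + 1)) < ⟨1, by omega⟩ := by simp [Fin.lt_def]
  have h2 := hf h1
  have e0 : f ⟨0, by omega⟩ = ⊥ := le_bot_iff.mp (hle _)
  have e1 : f ⟨1, by omega⟩ = ⊥ := le_bot_iff.mp (hle _)
  rw [e0, e1] at h2
  exact lt_irrefl _ h2

end Basic
section HatLemmas

variable {P : Type*} [PartialOrder P]

lemma toHat_lt_iff {p q : P} : toHat p < toHat q ↔ p < q := by
  simp [toHat]

lemma toHat_le_iff {p q : P} : toHat p ≤ toHat q ↔ p ≤ q := by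
  simp [toHat]

lemma bot_lt_toHat (p : P) : (⊥ : Hat P) < toHat p := WithBot.bot_lt_coe _

lemma toHat_lt_top (p : P) : toHat p < (⊤ : Hat P) := by
  exact WithBot.coe_lt_coe.mpr (WithTop.coe_lt_top p)

lemma hat_bot_lt_top : (⊥ : Hat P) < (⊤ : Hat P) := WithBot.bot_lt_coe _

lemma toHat_injective : Function.Injective (toHat : P → Hat P) := by
  intro a b h
  simpa [toHat] using h

lemma exists_eq_toHat (x : Hat P) (h1 : x ≠ ⊥) (h2 : x ≠ ⊤) : ∃ p : P, toHat p = x := by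
  induction x using WithBot.recBotCoe with
  | bot => exact absurd rfl h1
  | coe y =>
    induction y using WithTop.recTopCoe with
    | top => exact absurd rfl h2
    | coe p => exact ⟨p, rfl⟩

lemma memT_antitone {v : Hat P → ℕ} (hv : memT P v) {p q : Hat P} (h : p ≤ q) :
    v q ≤ v p := by
  rcases h.lt_or_eq with h | h
  · exact (hv.2 _ _ h).le
  · rw [h]

end HatLemmas

section HatFin

variable {P : Type*} [PartialOrder P] [Fintype P]

lemma memT_my_depth : memT P (fun x => depthN x) :=
  ⟨myDepth_top, fun _ _ h => myDepth_strictAnti h⟩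

lemma memT_my_subheight : memT P (fun x => rankN (Hat P) - heightN x) := by
  constructor
  · simp [myHeight_top]
  · intro p q h
    have h1 := myHeight_strictMono h
    have h2 := myHeight_le_rank (Q := Hat P) q
    dsimp only
    omega

lemma memT_depth_le {v : Hat P → ℕ} (hv : memT P v) (x : Hat P) : depthN x ≤ v x := by
  obtain ⟨f, hf, hge⟩ := myDepth_spec x
  have hd := my_drop (fun i => v (f i)) (fun i j hij => hv.2 _ _ (hf hij)) (Fin.last _)
  have h0 : v (f 0) ≤ v x := memT_antitone hv (hge 0)
  simp only [Fin.val_last] at hd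
  omega

lemma memT_height_le {v : Hat P → ℕ} (hv : memT P v) (x : Hat P) :
    v x + heightN x ≤ v ⊥ := by
  obtain ⟨f, hf, hle⟩ := myHeight_spec x
  have hd := my_drop (fun i => v (f i)) (fun i j hij => hv.2 _ _ (hf hij)) (Fin.last _)
  have h1 : v x ≤ v (f (Fin.last _)) := memT_antitone hv (hle _)
  have h2 : v (f 0) ≤ v ⊥ := memT_antitone hv bot_le
  simp only [Fin.val_last] at hd
  omega

lemma fact15 (x : Hat P) : heightN x + depthN x ≤ rankN (Hat P) := by
  have h := memT_height_le memT_my_depth x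
  have h2 := memT_depth_le memT_my_depth x
  rw [myDepth_bot] at h
  omega

lemma step1 :
    (∃! v : Hat P → ℕ, memT P v ∧ v ⊥ = rankN (Hat P)) ↔
      ∀ x : Hat P, heightN x + depthN x = rankN (Hat P) := by
  constructor
  · rintro ⟨v, -, huniq⟩ x
    have h1 := huniq (fun x => depthN x) ⟨memT_my_depth, myDepth_bot⟩
    have h2 := huniq (fun x => rankN (Hat P) - heightN x)
      ⟨memT_my_subheight, by simp [myHeight_bot]⟩
    have h3 := congrFun (h1.trans h2.symm) x
    have hx := myHeight_le_rank (Q := Hat P) x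
    omega
  · intro hpure
    refine ⟨fun x => depthN x, ⟨memT_my_depth, myDepth_bot⟩, ?_⟩
    rintro v ⟨hvT, hvb⟩
    funext x
    have h13 := memT_depth_le hvT x
    have h14 := memT_height_le hvT x
    have hp := hpure x
    rw [hvb] at h14
    show v x = depthN x
    omega

end HatFin
section Extract

variable {P : Type*} [PartialOrder P] [Fintype P]

lemma extract_middle {m : ℕ} (g : Fin (m + 1) → Hat P) (hg : StrictMono g)
    (s : ℕ) (h1 : 1 ≤ s) (h2 : s ≤ m)
    (htop : ∀ t : Fin (m + 1), 1 ≤ t.val → t.val ≤ s → g t ≠ ⊤) :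
    ∃ f : Fin s → P, StrictMono f ∧
      ∀ t : Fin s, toHat (f t) = g ⟨t.val + 1, by have := t.isLt; omega⟩ := by
  have hex : ∀ t : Fin s, ∃ p : P,
      toHat p = g ⟨t.val + 1, by have := t.isLt; omega⟩ := by
    intro t
    have htlt := t.isLt
    refine exists_eq_toHat _ ?_ (htop ⟨t.val + 1, by omega⟩
      (by exact Nat.succ_le_succ (Nat.zero_le _)) (by exact Nat.succ_le_of_lt t.isLt))
    intro hb
    have hlt : g ⟨0, by omega⟩ < g ⟨t.val + 1, by omega⟩ :=
      hg (Fin.mk_lt_mk.mpr (by omega))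
    rw [hb] at hlt
    exact not_lt_bot hlt
  choose f hf using hex
  refine ⟨f, ?_, hf⟩
  intro a b hab
  have hab' : a.val < b.val := hab
  have := b.isLt
  have hlt : toHat (f a) < toHat (f b) := by
    rw [hf a, hf b]
    exact hg (Fin.mk_lt_mk.mpr (by omega))
  exact toHat_lt_iff.mp hlt

lemma exists_enum {s : Set P} (hs : IsMaxChain (· ≤ ·) s) :
    ∃ f : Fin s.ncard → P, StrictMono f ∧ Set.range f = s := by
  haveI : Fintype s := s.toFinite.fintype
  letI : LinearOrder s :=
    { Subtype.partialOrder _ with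
      le_total := fun a b => hs.1.total a.2 b.2
      toDecidableLE := Classical.decRel _ }
  have hcard : Fintype.card s = s.ncard := by
    rw [← Nat.card_eq_fintype_card, Nat.card_coe_set_eq]
  let e := monoEquivOfFin s hcard
  refine ⟨fun t => (e t : P), fun a b hab => e.strictMono hab, ?_⟩
  ext y
  constructor
  · rintro ⟨t, rfl⟩
    exact (e t).2
  · intro hy
    exact ⟨e.symm ⟨y, hy⟩, congrArg Subtype.val (e.apply_symm_apply ⟨y, hy⟩)⟩

lemma maxChain_nonempty {s : Set P} (hs : IsMaxChain (· ≤ ·) s) [Nonempty P] :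
    s.Nonempty := by
  by_contra hne
  rw [Set.not_nonempty_iff_eq_empty] at hne
  obtain ⟨x⟩ := ‹Nonempty P›
  have hchain : IsChain (· ≤ ·) ({x} : Set P) := Set.Subsingleton.isChain (by simp)
  have := hs.2 hchain (by rw [hne]; exact Set.empty_subset _)
  rw [hne] at this
  exact (Set.singleton_ne_empty x) this.symm

lemma heightC_lt_ncard {s : Set P} {y : P} (hy : y ∈ s) :
    heightC s y + 1 ≤ s.ncard := by
  have hsub : {z ∈ s | z < y} ⊆ s \ {y} := fun z hz => ⟨hz.1, hz.2.ne⟩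
  have h1 : heightC s y ≤ (s \ {y}).ncard :=
    Set.ncard_le_ncard hsub s.toFinite.diff
  have h2 : (s \ {y}).ncard = s.ncard - 1 := Set.ncard_diff_singleton_of_mem hy
  have h3 : 0 < s.ncard := by
    rw [Set.ncard_pos s.toFinite]
    exact ⟨y, hy⟩
  unfold heightC at *
  omega

lemma reg_height_bound (hreg : RegularHP P) {d : ℕ} {C : Fin d → Set P}
    (hC : IsCCD C) :
    ∀ (k : ℕ) (f : Fin (k + 1) → P), StrictMono f → ∀ j, f (Fin.last k) ∈ C j →
      k ≤ heightC (C j) (f (Fin.last k)) := by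
  intro k
  induction k with
  | zero => intro f _ j _; exact Nat.zero_le _
  | succ k ih =>
    intro f hf j hj
    obtain ⟨j', hj'⟩ : ∃ j', f (Fin.castSucc (Fin.last k)) ∈ C j' := by
      have hx : f (Fin.castSucc (Fin.last k)) ∈ ⋃ i, C i := by
        rw [hC.2.2]; trivial
      exact Set.mem_iUnion.mp hx
    have hb := ih (fun t => f t.castSucc)
      (fun a b hab => hf (Fin.castSucc_lt_castSucc_iff.mpr hab)) j' hj'
    have hb' : k ≤ heightC (C j') (f (Fin.last k).castSucc) := hb
    have hlt := hreg.2 d C hC j' j _ _ hj' hj (hf (Fin.castSucc_lt_last (Fin.last k)))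
    omega

end Extract
section XLemmas

variable {P : Type*} [PartialOrder P] [Fintype P]

/-- X2 : rank of `Hat P` is at least `c + 1` where `c` is the cardinality of a chain. -/
lemma rank_lower {c : ℕ} (f : Fin c → P) (hf : StrictMono f) :
    c + 1 ≤ rankN (Hat P) := by
  refine le_myRank ⟨fun t => if h0 : t.val = 0 then ⊥ else if hc : c + 1 ≤ t.val then ⊤ else
    toHat (f ⟨t.val - 1, by have := t.isLt; omega⟩), ?_⟩
  intro a b hab
  dsimp only
  have hab' : a.val < b.val := hab
  have hbl := b.isLt
  by_cases ha0 : a.val = 0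
  · rw [dif_pos ha0, dif_neg (by omega : ¬ b.val = 0)]
    by_cases hbc : c + 1 ≤ b.val
    · rw [dif_pos hbc]; exact hat_bot_lt_top
    · rw [dif_neg hbc]; exact bot_lt_toHat _
  · rw [dif_neg ha0, dif_neg (by omega : ¬ b.val = 0)]
    by_cases hac : c + 1 ≤ a.val
    · exfalso; omega
    · rw [dif_neg hac]
      by_cases hbc : c + 1 ≤ b.val
      · rw [dif_pos hbc]; exact toHat_lt_top _
      · rw [dif_neg hbc]
        exact toHat_lt_iff.mpr (hf (Fin.mk_lt_mk.mpr (by omega)))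

/-- X1a : height lower bound along a chain through `p = f k`. -/
lemma height_lower {c : ℕ} (f : Fin c → P) (hf : StrictMono f) (k : Fin c) :
    k.val + 1 ≤ heightN (toHat (f k)) := by
  refine le_myHeight ⟨fun t => if h0 : t.val = 0 then ⊥ else
    toHat (f ⟨t.val - 1, by have := t.isLt; have := k.isLt; omega⟩), ?_, ?_⟩
  · intro a b hab
    dsimp only
    have hab' : a.val < b.val := hab
    by_cases ha0 : a.val = 0
    · rw [dif_pos ha0, dif_neg (by omega : ¬ b.val = 0)]
      exact bot_lt_toHat _
    · rw [dif_neg ha0, dif_neg (by omega : ¬ b.val = 0)]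
      exact toHat_lt_iff.mpr (hf (Fin.mk_lt_mk.mpr (by omega)))
  · intro t
    dsimp only
    by_cases ht0 : t.val = 0
    · rw [dif_pos ht0]; exact bot_le
    · rw [dif_neg ht0]
      have htl := t.isLt
      exact toHat_le_iff.mpr (hf.monotone (Fin.mk_le_mk.mpr (by omega)))

/-- X1b : depth lower bound along a chain through `p = f k`. -/
lemma depth_lower {c : ℕ} (f : Fin c → P) (hf : StrictMono f) (k : Fin c) :
    (c - 1 - k.val) + 1 ≤ depthN (toHat (f k)) := by
  have hk := k.isLt
  refine le_myDepth ⟨fun t => if hm : t.val = (c - 1 - k.val) + 1 then ⊤ else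
    toHat (f ⟨k.val + t.val, by have := t.isLt; omega⟩), ?_, ?_⟩
  · intro a b hab
    dsimp only
    have hab' : a.val < b.val := hab
    have hbl := b.isLt
    by_cases hbm : b.val = (c - 1 - k.val) + 1
    · rw [dif_pos hbm, dif_neg (by omega : ¬ a.val = (c - 1 - k.val) + 1)]
      exact toHat_lt_top _
    · rw [dif_neg hbm, dif_neg (by omega : ¬ a.val = (c - 1 - k.val) + 1)]
      exact toHat_lt_iff.mpr (hf (Fin.mk_lt_mk.mpr (by omega)))
  · intro t
    dsimp only
    by_cases htm : t.val = (c - 1 - k.val) + 1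
    · rw [dif_pos htm]; exact le_top
    · rw [dif_neg htm]
      exact toHat_le_iff.mpr (hf.monotone (Fin.mk_le_mk.mpr (by omega)))

lemma chain_to_heightC (hreg : RegularHP P) {d : ℕ} {C : Fin d → Set P} (hC : IsCCD C)
    {i : Fin d} {p : P} (hp : p ∈ C i) {h : ℕ} (h1 : 0 < h)
    (g : Fin (h + 1) → Hat P) (hg : StrictMono g) (hle : ∀ t, g t ≤ toHat p)
    (hlast : g (Fin.last h) = toHat p) :
    h ≤ heightC (C i) p + 1 := by
  have htop : ∀ t : Fin (h + 1), 1 ≤ t.val → t.val ≤ h → g t ≠ ⊤ :=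
    fun t _ _ => ne_top_of_le_ne_top (toHat_lt_top p).ne (hle t)
  obtain ⟨f, hf, hft⟩ := extract_middle g hg h h1 (le_refl _) htop
  have hfl : f ⟨h - 1, by omega⟩ = p := by
    apply toHat_injective
    rw [hft ⟨h - 1, by omega⟩]
    have he : (⟨(h - 1) + 1, by omega⟩ : Fin (h + 1)) = Fin.last h := by
      apply Fin.ext; simp; omega
    rw [he, hlast]
  let F : Fin (h - 1 + 1) → P := fun t => f ⟨t.val, by have := t.isLt; omega⟩
  have hF : StrictMono F := fun a b hab => hf (Fin.mk_lt_mk.mpr hab)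
  have hFlast : F (Fin.last (h - 1)) = p := by
    show f _ = p
    rw [show (⟨(Fin.last (h-1)).val, by have := (Fin.last (h-1)).isLt; omega⟩ : Fin h)
        = ⟨h - 1, by omega⟩ by apply Fin.ext; simp]
    exact hfl
  have hmem : F (Fin.last (h - 1)) ∈ C i := by rw [hFlast]; exact hp
  have hb := reg_height_bound hreg hC (h - 1) F hF i hmem
  rw [hFlast] at hb
  omega

/-- X4 : height upper bound from regularity. -/
lemma height_upper (hreg : RegularHP P) {d : ℕ} {C : Fin d → Set P} (hC : IsCCD C)
    {i : Fin d} {p : P} (hp : p ∈ C i) :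
    heightN (toHat p) ≤ heightC (C i) p + 1 := by
  obtain ⟨g, hg, hle, hlast⟩ := myHeight_spec' (toHat p)
  rcases Nat.eq_zero_or_pos (heightN (toHat p)) with h0 | h1
  · omega
  · exact chain_to_heightC hreg hC hp h1 g hg hle hlast

/-- X5 : depth of a maximal element. -/
lemma depth_maximal {p : P} (hp : ∀ y, p ≤ y → y = p) :
    depthN (toHat p) ≤ 1 := by
  refine myDepth_le fun n hn => ?_
  obtain ⟨f, hf, hge⟩ := hn
  by_contra hcon
  push_neg at hcon
  have mem2 : ∀ t : Fin (n + 1), f t = toHat p ∨ f t = ⊤ := by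
    intro t
    by_cases ht : f t = ⊤
    · exact Or.inr ht
    · left
      have hne : f t ≠ ⊥ := by
        intro hb
        have := (bot_lt_toHat p).trans_le (hge t)
        rw [hb] at this
        exact lt_irrefl _ this
      obtain ⟨q, hq⟩ := exists_eq_toHat (f t) hne ht
      have : p ≤ q := toHat_le_iff.mp (hq.symm ▸ hge t)
      rw [← hq, hp q this]
  have h01 : f ⟨0, by omega⟩ < f ⟨1, by omega⟩ := hf (Fin.mk_lt_mk.mpr (by omega))
  have h12 : f ⟨1, by omega⟩ < f ⟨2, by omega⟩ := hf (Fin.mk_lt_mk.mpr (by omega))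
  rcases mem2 ⟨0, by omega⟩ with e0 | e0 <;> rcases mem2 ⟨1, by omega⟩ with e1 | e1 <;>
    rcases mem2 ⟨2, by omega⟩ with e2 | e2 <;> rw [e0] at h01 <;> rw [e1] at h01 h12 <;>
    rw [e2] at h12 <;>
    first
      | exact lt_irrefl _ h01
      | exact lt_irrefl _ h12
      | exact absurd h01 not_top_lt
      | exact absurd h12 not_top_lt

lemma top_of_maxChain {s : Set P} (hs : IsMaxChain (· ≤ ·) s) {p : P} (hp : p ∈ s)
    (htop : ∀ z ∈ s, z ≤ p) : ∀ y, p ≤ y → y = p := by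
  intro y hy
  by_contra hne
  have hchain : IsChain (· ≤ ·) (insert y s) :=
    hs.1.insert fun b hb _ => Or.inr ((htop b hb).trans hy)
  have heq := hs.2 hchain (Set.subset_insert _ _)
  have hymem : y ∈ s := by rw [heq]; exact Set.mem_insert y s
  exact hne (le_antisymm (htop y hymem) hy)

end XLemmas
section Final

variable {P : Type*} [PartialOrder P] [Fintype P]

/-- X3 : rank upper bound when all chains have the same cardinality. -/
lemma rank_upper (hreg : RegularHP P) {d : ℕ} {C : Fin d → Set P} (hC : IsCCD C)
    {c : ℕ} (hc : 1 ≤ c) (hcards : ∀ j, (C j).ncard = c) :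
    rankN (Hat P) ≤ c + 1 := by
  by_contra hcon
  push_neg at hcon
  obtain ⟨g, hg⟩ := myRank_spec (Q := Hat P)
  have htop : ∀ t : Fin (rankN (Hat P) + 1), 1 ≤ t.val → t.val ≤ rankN (Hat P) - 1 →
      g t ≠ ⊤ := by
    intro t _ ht2
    have hlt : g t < g (Fin.last _) := hg (by
      rw [Fin.lt_def, Fin.val_last]
      omega)
    exact ne_top_of_lt (lt_of_lt_of_le hlt le_top)
  obtain ⟨f, hf, -⟩ := extract_middle g hg (rankN (Hat P) - 1) (by omega) (by omega) htop
  let F : Fin (rankN (Hat P) - 2 + 1) → P := fun t => f ⟨t.val, by have := t.isLt; omega⟩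
  have hF : StrictMono F := fun a b hab => hf (Fin.mk_lt_mk.mpr hab)
  obtain ⟨j, hj⟩ : ∃ j, F (Fin.last _) ∈ C j := by
    have hx : F (Fin.last _) ∈ ⋃ i, C i := by rw [hC.2.2]; trivial
    exact Set.mem_iUnion.mp hx
  have hb := reg_height_bound hreg hC _ F hF j hj
  have hhc := heightC_lt_ncard hj
  rw [hcards j] at hhc
  omega

/-- Step 2 : purity of `Hat P` is equivalent to all chains having equal length. -/
lemma step2 (hreg : RegularHP P) {d : ℕ} {C : Fin d → Set P} (hC : IsCCD C) :
    (∀ x : Hat P, heightN x + depthN x = rankN (Hat P)) ↔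
      ∀ i j : Fin d, (C i).ncard = (C j).ncard := by
  have cover : ∀ q : P, ∃ j, q ∈ C j := fun q =>
    Set.mem_iUnion.mp (by rw [hC.2.2]; trivial)
  constructor
  · intro hpure
    have key : ∀ i j : Fin d, ¬ ((C i).ncard < (C j).ncard) := by
      intro i j hlt
      have hPne : Nonempty P := by
        obtain ⟨y, hy⟩ := Set.nonempty_of_ncard_ne_zero
          (show (C j).ncard ≠ 0 by omega)
        exact ⟨y⟩
      have hne : (C i).Nonempty := maxChain_nonempty (hC.1 i)
      have hci : 0 < (C i).ncard := (Set.ncard_pos (C i).toFinite).mpr hne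
      obtain ⟨f, hf, hrange⟩ := exists_enum (hC.1 i)
      let p : P := f ⟨(C i).ncard - 1, by omega⟩
      have hpC : p ∈ C i := by rw [← hrange]; exact ⟨_, rfl⟩
      have htopp : ∀ z ∈ C i, z ≤ p := by
        intro z hz
        rw [← hrange] at hz
        obtain ⟨k, rfl⟩ := hz
        refine hf.monotone ?_
        rw [Fin.le_def]
        show k.val ≤ (C i).ncard - 1
        have := k.isLt
        omega
      have hmax := top_of_maxChain (hC.1 i) hpC htopp
      have hd := depth_maximal hmax
      have hh := height_upper hreg hC hpC
      have hhc := heightC_lt_ncard hpC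
      obtain ⟨fj, hfj, -⟩ := exists_enum (hC.1 j)
      have hr := rank_lower fj hfj
      have hpure' := hpure (toHat p)
      omega
    intro i j
    exact le_antisymm (not_lt.mp (key j i)) (not_lt.mp (key i j))
  · intro hcards x
    induction x using WithBot.recBotCoe with
    | bot =>
      rw [myHeight_bot, myDepth_bot]
      exact Nat.zero_add _
    | coe y =>
      induction y using WithTop.recTopCoe with
      | top =>
        show heightN (⊤ : Hat P) + depthN (⊤ : Hat P) = rankN (Hat P)
        rw [myHeight_top, myDepth_top]
        exact Nat.add_zero _
      | coe p =>
        show heightN (toHat p) + depthN (toHat p) = rankN (Hat P)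
        obtain ⟨j, hj⟩ := cover p
        obtain ⟨f, hf, hrange⟩ := exists_enum (hC.1 j)
        rw [← hrange] at hj
        obtain ⟨k, rfl⟩ := hj
        have h1 := height_lower f hf k
        have h2 := depth_lower f hf k
        have h3 := fact15 (toHat (f k))
        have hk := k.isLt
        have hru := rank_upper hreg hC (c := (C j).ncard) (by omega)
          (fun j' => hcards j' j)
        omega

end Final

/-- If `I(P)` is regular hyper-planar with canonical chain decomposition
`C₁ ∪ … ∪ C_d`, then there is exactly one `v ∈ T(P)` with
`v(-∞) = rank (Hat P)` (i.e. `I(P)` is pseudo-Gorenstein) if and only if all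
chains `C₁, …, C_d` have the same length. -/
theorem pseudoGorenstein_iff_equal_lengths (P : Type*) [Fintype P]
    [PartialOrder P] (hreg : RegularHP P) (d : ℕ) (C : Fin d → Set P)
    (hC : IsCCD C) :
    (∃! v : Hat P → ℕ, memT P v ∧ v ⊥ = rankN (Hat P)) ↔
      ∀ i j : Fin d, (C i).ncard = (C j).ncard := by
  rw [step1]
  exact step2 hreg hC
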